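/- arXiv:math/0504252 — 2 statements merged into one kernel-verified Lean document; each statement's English description precedes it below -/
import Mathlib

section
/- There exists a universal constant C₀ > 0 with the following property: for every M ≥ 0 and every function φ : ℂ → ℝ that is C² on the open unit disk 𝔻 and satisfies 0 ≤ Δφ(z) ≤ M for all z ∈ 𝔻, there exists a holomorphic function G on the disk {z : |z| < 1/2} with G(0) = 0 such that |φ(z) − φ(0) − 2·Re(G(z))| ≤ C₀·M for all |z| < 1/2. (Quantitative form of Lemma 6.1, the construction of Berndtsson–Ortega Cerdà: a function with bounded nonnegative Laplacian differs from the real part of a holomorphic function by a bounded error on the half-radius disk.) -/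
open Metric

noncomputable section

/-- The Euclidean Laplacian `∂²φ/∂x² + ∂²φ/∂y²` of `φ : ℂ → ℝ` at a point, as the sum of
the second directional derivatives in the directions `1` and `i`. -/
def lapC (φ : ℂ → ℝ) (z : ℂ) : ℝ :=
  (fderiv ℝ (fun w => fderiv ℝ φ w 1) z) 1 +
    (fderiv ℝ (fun w => fderiv ℝ φ w Complex.I) z) Complex.I

set_option maxHeartbeats 1000000

section BOCAux
open Complex intervalIntegral

lemma clm_decomp (T : ℂ →L[ℝ] ℂ) (v : ℂ) :
    T v = (T 1 - I * T I) / 2 * v + (T 1 + I * T I) / 2 * (starRingEnd ℂ) v := by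
  have hv : v = (v.re : ℝ) • (1:ℂ) + (v.im : ℝ) • I := by
    simp [Complex.real_smul, Complex.re_add_im]
  have hc : (starRingEnd ℂ) v = (v.re : ℂ) - (v.im : ℂ) * I := by
    rw [Complex.ext_iff]; simp
  have hT : T v = (v.re : ℂ) * T 1 + (v.im : ℂ) * T I := by
    conv_lhs => rw [hv]
    rw [map_add, map_smul, map_smul, Complex.real_smul, Complex.real_smul]
  have hv2 : v = (v.re : ℂ) + (v.im : ℂ) * I := by rw [Complex.ext_iff]; simp
  rw [hT, hc]
  linear_combination (-(T 1 - I * T I)/2) * hv2 + (v.im : ℂ) * (T I) * Complex.I_sq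

lemma hasDerivAt_expI (θ : ℝ) :
    HasDerivAt (fun t : ℝ => Complex.exp (t * Complex.I)) (Complex.I * Complex.exp (θ * Complex.I)) θ := by
  have h1 : HasDerivAt (fun t : ℝ => (t : ℂ) * Complex.I) Complex.I θ := by
    simpa using (Complex.ofRealCLM.hasDerivAt (x := θ)).mul_const Complex.I
  simpa [mul_comm, Function.comp_def] using (Complex.hasDerivAt_exp (θ * Complex.I)).comp θ h1

lemma hasDerivAt_ofReal_mul (c : ℂ) (s : ℝ) :
    HasDerivAt (fun t : ℝ => (t : ℂ) * c) c s := by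
  simpa using (Complex.ofRealCLM.hasDerivAt (x := s)).mul_const c

def eE (θ : ℝ) : ℂ := Complex.exp (θ * Complex.I)
def rr (ε s : ℝ) : ℂ := (ε:ℂ) + (s:ℂ) * ((3:ℂ)/4 - (ε:ℂ))
def uu (z : ℂ) (ε s θ : ℝ) : ℂ := z + (s:ℂ) * (-z) + rr ε s * eE θ
def vv (z : ℂ) (ε θ : ℝ) : ℂ := -z + ((3:ℂ)/4 - (ε:ℂ)) * eE θ
def PP (f : ℂ → ℂ) (z : ℂ) (ε s θ : ℝ) : ℂ :=
  rr ε s * (Complex.I * eE θ) * f (uu z ε s θ) * (uu z ε s θ - z)⁻¹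
def PP' (f : ℂ → ℂ) (A : ℂ → ℂ →L[ℝ] ℂ) (z : ℂ) (ε s θ : ℝ) : ℂ :=
  (((3:ℂ)/4 - (ε:ℂ)) * (Complex.I * eE θ) * f (uu z ε s θ)
      + rr ε s * (Complex.I * eE θ) * (A (uu z ε s θ) (vv z ε θ))) * (uu z ε s θ - z)⁻¹
    + rr ε s * (Complex.I * eE θ) * f (uu z ε s θ) * (-(vv z ε θ) / (uu z ε s θ - z) ^ 2)
def QQ (f : ℂ → ℂ) (z : ℂ) (ε s θ : ℝ) : ℂ :=
  vv z ε θ * f (uu z ε s θ) * (uu z ε s θ - z)⁻¹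
def QQ' (f : ℂ → ℂ) (A : ℂ → ℂ →L[ℝ] ℂ) (z : ℂ) (ε s θ : ℝ) : ℂ :=
  (((3:ℂ)/4 - (ε:ℂ)) * (Complex.I * eE θ) * f (uu z ε s θ)
      + vv z ε θ * (A (uu z ε s θ) (rr ε s * (Complex.I * eE θ)))) * (uu z ε s θ - z)⁻¹
    + vv z ε θ * f (uu z ε s θ) * (-(rr ε s * (Complex.I * eE θ)) / (uu z ε s θ - z) ^ 2)


variable {f : ℂ → ℂ} {A : ℂ → ℂ →L[ℝ] ℂ} {z : ℂ} {M ε s θ : ℝ}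

lemma heE_norm (θ : ℝ) : ‖eE θ‖ = 1 := by
  simp [eE, Complex.norm_exp]

lemma rr_coe (ε s : ℝ) : rr ε s = ((ε + s * (3/4 - ε) : ℝ) : ℂ) := by
  unfold rr; push_cast; ring

-- basic geometry bounds
lemma geom_bounds (hz : ‖z‖ < 1/2) (hε : 0 < ε) (hε16 : ε ≤ 1/16)
    (hs1 : -(ε/3) < s) (hs2 : s < 101/100) :
    ε/2 ≤ ‖uu z ε s θ - z‖ ∧ (ε + s * (3/4 - ε)) ≤ 6 * ‖uu z ε s θ - z‖ ∧
      ‖uu z ε s θ‖ ≤ 9/10 ∧ ε/2 ≤ ε + s * (3/4 - ε) ∧ ε + s * (3/4 - ε) ≤ 1 := by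
  have hzn : (0:ℝ) ≤ ‖z‖ := norm_nonneg z
  have hz' : ‖z‖ ≤ 1/2 := le_of_lt hz
  have hρlb : ε/2 ≤ ε + s * (3/4 - ε) := by
    rcases le_or_gt 0 s with h | h
    · nlinarith [mul_nonneg h (show (0:ℝ) ≤ 3/4 - ε by linarith)]
    · nlinarith [mul_le_mul (show -s ≤ ε/3 by linarith) (show 3/4 - ε ≤ 3/4 by linarith)
        (by linarith) (by linarith : (0:ℝ) ≤ ε/3)]
  have hρub : ε + s * (3/4 - ε) ≤ 1 := by
    rcases le_or_gt 0 s with h | h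
    · nlinarith [mul_le_mul (le_of_lt hs2) (show 3/4 - ε ≤ 3/4 by linarith) (by linarith) (by norm_num : (0:ℝ) ≤ 101/100)]
    · nlinarith [mul_nonpos_of_nonpos_of_nonneg (le_of_lt h) (show (0:ℝ) ≤ 3/4 - ε by linarith)]
  have hnrr : ‖rr ε s‖ = ε + s * (3/4 - ε) := by
    rw [rr_coe, Complex.norm_real]; exact _root_.abs_of_nonneg (by linarith)
  have hrel : rr ε s * eE θ = (uu z ε s θ - z) + (s:ℂ) * z := by unfold uu; ring
  have h1 : ε + s * (3/4 - ε) ≤ ‖uu z ε s θ - z‖ + |s| * ‖z‖ := by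
    calc ε + s * (3/4 - ε) = ‖rr ε s * eE θ‖ := by rw [norm_mul, hnrr, heE_norm, mul_one]
    _ = ‖(uu z ε s θ - z) + (s:ℂ) * z‖ := by rw [hrel]
    _ ≤ ‖uu z ε s θ - z‖ + |s| * ‖z‖ := by
        refine (norm_add_le _ _).trans ?_
        rw [norm_mul, Complex.norm_real, Real.norm_eq_abs]
  have hD0 : (0:ℝ) ≤ ‖uu z ε s θ - z‖ := norm_nonneg _
  have hDlow : ε/2 ≤ ‖uu z ε s θ - z‖ := by
    rcases le_or_gt 0 s with h | h
    · rw [_root_.abs_of_nonneg (h : (0:ℝ) ≤ s)] at h1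
      nlinarith [mul_nonneg h (show (0:ℝ) ≤ 3/4 - ε - ‖z‖ by linarith)]
    · rw [_root_.abs_of_neg (h : s < (0:ℝ))] at h1
      have q1 : (-s) * (3/4 - ε) ≤ (ε/3) * (3/4) :=
        mul_le_mul (by linarith) (by linarith) (by linarith) (by linarith)
      have q2 : (-s) * ‖z‖ ≤ (ε/3) * (1/2) :=
        mul_le_mul (by linarith) hz' hzn (by linarith)
      nlinarith
  have hD6 : (ε + s * (3/4 - ε)) ≤ 6 * ‖uu z ε s θ - z‖ := by
    rcases le_or_gt 0 s with h | h
    · rw [_root_.abs_of_nonneg (h : (0:ℝ) ≤ s)] at h1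
      nlinarith [mul_nonneg h (show (0:ℝ) ≤ 1/2 - ‖z‖ by linarith),
        mul_nonneg h (show (0:ℝ) ≤ 3/4 - 5*ε by linarith)]
    · rw [_root_.abs_of_neg (h : s < (0:ℝ))] at h1
      have q1 : (-s) * (3/4 - ε) ≤ (ε/3) * (3/4) :=
        mul_le_mul (by linarith) (by linarith) (by linarith) (by linarith)
      have q2 : (-s) * ‖z‖ ≤ (ε/3) * (1/2) :=
        mul_le_mul (by linarith) hz' hzn (by linarith)
      nlinarith
  have huu : ‖uu z ε s θ‖ ≤ 9/10 := by
    have h2 : ‖uu z ε s θ‖ ≤ |1 - s| * ‖z‖ + (ε + s * (3/4 - ε)) := by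
      calc ‖uu z ε s θ‖ ≤ ‖z + (s:ℂ)*(-z)‖ + ‖rr ε s * eE θ‖ := norm_add_le _ _
      _ = |1 - s| * ‖z‖ + (ε + s * (3/4 - ε)) := by
          rw [norm_mul, hnrr, heE_norm, mul_one,
            show z + (s:ℂ)*(-z) = ((1 - s : ℝ) : ℂ) * z by push_cast; ring, norm_mul,
            Complex.norm_real, Real.norm_eq_abs]
    rcases le_or_gt s 1 with h | h
    · rw [_root_.abs_of_nonneg (show (0:ℝ) ≤ 1 - s by linarith)] at h2
      have q1 : (1 - s) * ‖z‖ ≤ (1 - s) * (1/2) :=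
        mul_le_mul_of_nonneg_left hz' (by linarith)
      have q2 : (0:ℝ) ≤ (s + ε/3) * ε := mul_nonneg (by linarith) (le_of_lt hε)
      nlinarith
    · rw [_root_.abs_of_neg (show 1 - s < (0:ℝ) by linarith)] at h2
      have q1 : (s - 1) * ‖z‖ ≤ (1/100) * (1/2) :=
        mul_le_mul (by linarith) hz' hzn (by norm_num)
      have q2 : s * (3/4 - ε) ≤ (101/100) * (3/4) :=
        mul_le_mul (le_of_lt hs2) (by linarith) (by linarith) (by norm_num)
      nlinarith
  exact ⟨hDlow, hD6, huu, hρlb, hρub⟩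

lemma key_estimate (hz : ‖z‖ < 1/2) (hε : 0 < ε) (hε16 : ε ≤ 1/16)
    (hs1 : -(ε/3) < s) (hs2 : s < 101/100)
    (hM : ‖A (uu z ε s θ) 1 + Complex.I * A (uu z ε s θ) Complex.I‖ ≤ M) :
    ‖PP' f A z ε s θ - QQ' f A z ε s θ‖ ≤ 8 * M := by
  obtain ⟨hd1, hd2, _, hρlb, hρub⟩ := geom_bounds (θ := θ) hz hε hε16 hs1 hs2
  set ρs : ℝ := ε + s * (3/4 - ε) with hρs
  set D : ℝ := ‖uu z ε s θ - z‖ with hD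
  have hD0 : (0:ℝ) < D := lt_of_lt_of_le (by linarith) hd1
  have hne : uu z ε s θ - z ≠ 0 := by
    intro h; rw [hD, h, norm_zero] at hD0; exact lt_irrefl 0 hD0
  have hnrr : ‖rr ε s‖ = ρs := by
    rw [rr_coe, Complex.norm_real]; exact _root_.abs_of_nonneg (by linarith)
  have e1 := clm_decomp (A (uu z ε s θ)) (vv z ε θ)
  have e2 := clm_decomp (A (uu z ε s θ)) (rr ε s * (Complex.I * eE θ))
  have hid : PP' f A z ε s θ - QQ' f A z ε s θ
      = (A (uu z ε s θ) 1 + Complex.I * A (uu z ε s θ) Complex.I)/2 *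
        (rr ε s * (Complex.I * eE θ) * (starRingEnd ℂ) (vv z ε θ)
         - vv z ε θ * (starRingEnd ℂ) (rr ε s * (Complex.I * eE θ))) * (uu z ε s θ - z)⁻¹ := by
    unfold PP' QQ'; rw [e1, e2]; ring
  have hvv : ‖vv z ε θ‖ ≤ 5/4 := by
    have h1 : ‖vv z ε θ‖ ≤ ‖z‖ + ‖((3:ℂ)/4 - (ε:ℂ)) * eE θ‖ := by
      unfold vv; exact (norm_add_le _ _).trans (by rw [norm_neg])
    have h2 : ‖((3:ℂ)/4 - (ε:ℂ)) * eE θ‖ = |3/4 - ε| := by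
      rw [norm_mul, heE_norm, mul_one, show (3:ℂ)/4 - (ε:ℂ) = ((3/4 - ε : ℝ) : ℂ) by push_cast; ring,
        Complex.norm_real, Real.norm_eq_abs]
    rw [h2, _root_.abs_of_nonneg (show (0:ℝ) ≤ 3/4 - ε by linarith)] at h1
    linarith
  have hq1n : ‖rr ε s * (Complex.I * eE θ)‖ = ρs := by
    rw [norm_mul, norm_mul, hnrr, Complex.norm_I, heE_norm]; ring
  have hMn : (0:ℝ) ≤ M := le_trans (norm_nonneg _) hM
  rw [hid]
  rw [norm_mul, norm_mul, norm_inv]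
  have hb : ‖(A (uu z ε s θ) 1 + Complex.I * A (uu z ε s θ) Complex.I)/2‖ ≤ M/2 := by
    rw [norm_div]
    have h2 : ‖(2:ℂ)‖ = 2 := by norm_num
    rw [h2]; linarith
  have hY : ‖rr ε s * (Complex.I * eE θ) * (starRingEnd ℂ) (vv z ε θ)
         - vv z ε θ * (starRingEnd ℂ) (rr ε s * (Complex.I * eE θ))‖ ≤ 2 * ρs * (5/4) := by
    calc _ ≤ ‖rr ε s * (Complex.I * eE θ) * (starRingEnd ℂ) (vv z ε θ)‖
        + ‖vv z ε θ * (starRingEnd ℂ) (rr ε s * (Complex.I * eE θ))‖ := norm_sub_le _ _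
    _ = ρs * ‖vv z ε θ‖ + ‖vv z ε θ‖ * ρs := by
      simp only [norm_mul, RCLike.norm_conj, Complex.norm_I, heE_norm, hnrr]; ring
    _ ≤ 2 * ρs * (5/4) := by nlinarith [hvv, norm_nonneg (vv z ε θ)]
  have hDinv : (0:ℝ) < D⁻¹ := inv_pos.2 hD0
  have hstep : ‖(A (uu z ε s θ) 1 + Complex.I * A (uu z ε s θ) Complex.I)/2‖ *
      ‖(rr ε s * (Complex.I * eE θ) * (starRingEnd ℂ) (vv z ε θ)
         - vv z ε θ * (starRingEnd ℂ) (rr ε s * (Complex.I * eE θ)))‖ * ‖uu z ε s θ - z‖⁻¹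
      ≤ (M/2) * (2 * ρs * (5/4)) * D⁻¹ := by
    apply mul_le_mul _ le_rfl (le_of_lt hDinv) (mul_nonneg (by linarith) (by linarith))
    exact mul_le_mul hb hY (norm_nonneg _) (by linarith)
  have hlast : (M/2) * (2 * ρs * (5/4)) * D⁻¹ ≤ 8 * M := by
    have h6 : ρs * D⁻¹ ≤ 6 := by
      rw [← div_eq_mul_inv, div_le_iff₀ hD0]; linarith
    nlinarith [mul_le_mul_of_nonneg_left h6 hMn]
  linarith

lemma hasDerivAt_uu_s (z : ℂ) (ε θ : ℝ) (s : ℝ) :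
    HasDerivAt (fun s => uu z ε s θ) (vv z ε θ) s := by
  unfold uu vv rr
  have h1 : HasDerivAt (fun s : ℝ => z + (s:ℂ) * (-z)) (-z) s :=
    (hasDerivAt_ofReal_mul (-z) s).const_add z
  have h2 : HasDerivAt (fun s : ℝ => ((ε:ℂ) + (s:ℂ) * ((3:ℂ)/4 - (ε:ℂ))) * eE θ)
      (((3:ℂ)/4 - (ε:ℂ)) * eE θ) s := by
    simpa using (((hasDerivAt_ofReal_mul ((3:ℂ)/4 - (ε:ℂ)) s).const_add (ε:ℂ)).mul_const (eE θ))
  exact h1.add h2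

lemma hasDerivAt_rr (ε : ℝ) (s : ℝ) :
    HasDerivAt (fun s => rr ε s) ((3:ℂ)/4 - (ε:ℂ)) s := by
  unfold rr
  exact (hasDerivAt_ofReal_mul ((3:ℂ)/4 - (ε:ℂ)) s).const_add (ε:ℂ)

lemma hasDerivAt_uu_θ (z : ℂ) (ε s : ℝ) (θ : ℝ) :
    HasDerivAt (fun θ => uu z ε s θ) (rr ε s * (Complex.I * eE θ)) θ := by
  unfold uu eE
  have h2 : HasDerivAt (fun θ : ℝ => rr ε s * Complex.exp (θ * Complex.I))
      (rr ε s * (Complex.I * Complex.exp (θ * Complex.I))) θ := (hasDerivAt_expI θ).const_mul _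
  exact h2.const_add _

lemma hasDerivAt_vv_θ (z : ℂ) (ε : ℝ) (θ : ℝ) :
    HasDerivAt (fun θ => vv z ε θ) (((3:ℂ)/4 - (ε:ℂ)) * (Complex.I * eE θ)) θ := by
  unfold vv eE
  exact (((hasDerivAt_expI θ).const_mul _).const_add _)

lemma hasDerivAt_PP (hf : HasFDerivAt f (A (uu z ε s θ)) (uu z ε s θ))
    (hne : uu z ε s θ - z ≠ 0) :
    HasDerivAt (fun s => PP f z ε s θ) (PP' f A z ε s θ) s := by
  have hq1 : HasDerivAt (fun s => rr ε s * (Complex.I * eE θ))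
      (((3:ℂ)/4 - (ε:ℂ)) * (Complex.I * eE θ)) s := (hasDerivAt_rr ε s).mul_const _
  have hq2 : HasDerivAt (fun s => f (uu z ε s θ)) (A (uu z ε s θ) (vv z ε θ)) s :=
    hf.comp_hasDerivAt s (hasDerivAt_uu_s z ε θ s)
  have hq3 : HasDerivAt (fun s => (uu z ε s θ - z)⁻¹)
      (-((uu z ε s θ - z) ^ 2)⁻¹ * vv z ε θ) s :=
    (hasDerivAt_inv hne).comp s ((hasDerivAt_uu_s z ε θ s).sub_const z)
  have := ((hq1.mul hq2).mul hq3)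
  unfold PP PP'
  simp only [Pi.mul_def] at this
  exact this.congr_deriv (by ring)

lemma hasDerivAt_QQ (hf : HasFDerivAt f (A (uu z ε s θ)) (uu z ε s θ))
    (hne : uu z ε s θ - z ≠ 0) :
    HasDerivAt (fun θ => QQ f z ε s θ) (QQ' f A z ε s θ) θ := by
  have hq1 := hasDerivAt_vv_θ z ε θ
  have hq2 : HasDerivAt (fun θ => f (uu z ε s θ)) (A (uu z ε s θ) (rr ε s * (Complex.I * eE θ))) θ :=
    hf.comp_hasDerivAt θ (hasDerivAt_uu_θ z ε s θ)
  have hq3 : HasDerivAt (fun θ => (uu z ε s θ - z)⁻¹)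
      (-((uu z ε s θ - z) ^ 2)⁻¹ * (rr ε s * (Complex.I * eE θ))) θ :=
    (hasDerivAt_inv hne).comp θ ((hasDerivAt_uu_θ z ε s θ).sub_const z)
  have := ((hq1.mul hq2).mul hq3)
  unfold QQ QQ'
  simp only [Pi.mul_def] at this
  exact this.congr_deriv (by ring)


lemma heE_cont : Continuous eE := by
  unfold eE
  exact Complex.continuous_exp.comp (Complex.continuous_ofReal.mul continuous_const)

lemma core (hA : ∀ w ∈ closedBall (0:ℂ) (9/10), HasFDerivAt f (A w) w)
    (hAc : ContinuousOn A (closedBall (0:ℂ) (9/10)))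
    (hb : ∀ w ∈ closedBall (0:ℂ) (9/10), ‖A w 1 + Complex.I * A w Complex.I‖ ≤ M)
    (hz : ‖z‖ < 1/2) :
    ‖f z - (2*Real.pi)⁻¹ • ∫ θ in (0:ℝ)..(2*Real.pi),
       ((3:ℂ)/4 * eE θ) * f ((3:ℂ)/4 * eE θ) * ((3:ℂ)/4 * eE θ - z)⁻¹‖ ≤ 8 * M := by
  have hπ : (0:ℝ) < Real.pi := Real.pi_pos
  have hM0 : (0:ℝ) ≤ M := le_trans (norm_nonneg _) (hb 0 (by simp; norm_num))
  have hfc : ContinuousOn f (closedBall (0:ℂ) (9/10)) :=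
    fun w hw => ((hA w hw).differentiableAt.continuousAt).continuousWithinAt
  obtain ⟨Cf, hCf⟩ := (isCompact_closedBall (0:ℂ) (9/10)).exists_bound_of_continuousOn hfc
  obtain ⟨CA, hCA⟩ := (isCompact_closedBall (0:ℂ) (9/10)).exists_bound_of_continuousOn hAc
  have hCf0 : (0:ℝ) ≤ Cf := le_trans (norm_nonneg _) (hCf 0 (by simp; norm_num))
  have hCA0 : (0:ℝ) ≤ CA := le_trans (norm_nonneg _) (hCA 0 (by simp; norm_num))
  refine le_of_forall_pos_le_add (fun η hη => ?_)
  -- choose ε from continuity of f at z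
  have hzmem : z ∈ closedBall (0:ℂ) (9/10) := by
    rw [mem_closedBall, dist_zero_right]; linarith
  have hfcz : ContinuousAt f z := (hA z hzmem).differentiableAt.continuousAt
  obtain ⟨δ, hδ0, hδ⟩ := Metric.continuousAt_iff.mp hfcz η hη
  set ε := min (δ/2) (1/16) with hεdef
  have hε : 0 < ε := lt_min (by linarith) (by norm_num)
  have hε16 : ε ≤ 1/16 := min_le_right _ _
  have hεδ : ε < δ := lt_of_le_of_lt (min_le_left _ _) (by linarith)
  -- facts for s in range
  set Soo : Set ℝ := Set.Ioo (-(ε/3)) (101/100) with hSoo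
  have hmemS : ∀ s ∈ Soo, -(ε/3) < s ∧ s < 101/100 := fun s hs => ⟨hs.1, hs.2⟩
  -- continuity in θ
  have hconteE : Continuous eE := by
    unfold eE; exact Complex.continuous_exp.comp (Complex.continuous_ofReal.mul continuous_const)
  have hcontu : ∀ s, Continuous fun θ => uu z ε s θ := by
    intro s; unfold uu
    exact continuous_const.add (continuous_const.mul hconteE)
  have hcontvv : Continuous fun θ => vv z ε θ := by
    unfold vv; exact continuous_const.add (continuous_const.mul hconteE)
  have humem : ∀ s ∈ Soo, ∀ θ : ℝ, uu z ε s θ ∈ closedBall (0:ℂ) (9/10) := by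
    intro s hs θ
    rw [mem_closedBall, dist_zero_right]
    exact (geom_bounds hz hε hε16 hs.1 hs.2).2.2.1
  have hune : ∀ s ∈ Soo, ∀ θ : ℝ, uu z ε s θ - z ≠ 0 := by
    intro s hs θ
    have h1 := (geom_bounds (θ := θ) hz hε hε16 hs.1 hs.2).1
    intro h; rw [h, norm_zero] at h1; linarith
  have hcontfu : ∀ s ∈ Soo, Continuous fun θ => f (uu z ε s θ) := by
    intro s hs
    simpa [Function.comp_def] using hfc.comp_continuous (hcontu s) (humem s hs)
  have hcontAu : ∀ s ∈ Soo, Continuous fun θ => A (uu z ε s θ) := by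
    intro s hs
    simpa [Function.comp_def] using hAc.comp_continuous (hcontu s) (humem s hs)
  have hcontinv : ∀ s ∈ Soo, Continuous fun θ => (uu z ε s θ - z)⁻¹ := by
    intro s hs
    exact ((hcontu s).sub continuous_const).inv₀ (hune s hs)
  have hcontPP : ∀ s ∈ Soo, Continuous fun θ => PP f z ε s θ := by
    intro s hs; unfold PP
    have c1 : Continuous fun θ : ℝ => rr ε s * (Complex.I * eE θ) :=
      continuous_const.mul (continuous_const.mul hconteE)
    exact (c1.mul (hcontfu s hs)).mul (hcontinv s hs)
  have hcontPP' : ∀ s ∈ Soo, Continuous fun θ => PP' f A z ε s θ := by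
    intro s hs; unfold PP'
    have c1 : Continuous fun θ : ℝ => rr ε s * (Complex.I * eE θ) :=
      continuous_const.mul (continuous_const.mul hconteE)
    have c2 : Continuous fun θ : ℝ => ((3:ℂ)/4 - (ε:ℂ)) * (Complex.I * eE θ) :=
      continuous_const.mul (continuous_const.mul hconteE)
    have c4 : Continuous fun θ : ℝ => -(vv z ε θ) / (uu z ε s θ - z) ^ 2 :=
      Continuous.div (hcontvv.neg) (((hcontu s).sub continuous_const).pow 2)
        (fun θ => pow_ne_zero 2 (hune s hs θ))
    exact (((c2.mul (hcontfu s hs)).add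
        (c1.mul ((hcontAu s hs).clm_apply hcontvv))).mul (hcontinv s hs)).add
      (((c1.mul (hcontfu s hs))).mul c4)
  have hcontQQ' : ∀ s ∈ Soo, Continuous fun θ => QQ' f A z ε s θ := by
    intro s hs; unfold QQ'
    have c1 : Continuous fun θ : ℝ => rr ε s * (Complex.I * eE θ) :=
      continuous_const.mul (continuous_const.mul hconteE)
    have c2 : Continuous fun θ : ℝ => ((3:ℂ)/4 - (ε:ℂ)) * (Complex.I * eE θ) :=
      continuous_const.mul (continuous_const.mul hconteE)
    have c4 : Continuous fun θ : ℝ => -(rr ε s * (Complex.I * eE θ)) / (uu z ε s θ - z) ^ 2 :=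
      Continuous.div (c1.neg) (((hcontu s).sub continuous_const).pow 2)
        (fun θ => pow_ne_zero 2 (hune s hs θ))
    exact (((c2.mul (hcontfu s hs)).add
        ((hcontvv.mul ((hcontAu s hs).clm_apply c1)))).mul (hcontinv s hs)).add
      ((hcontvv.mul (hcontfu s hs)).mul c4)
  -- crude uniform bound for PP'
  have hIeE : ∀ θ : ℝ, ‖Complex.I * eE θ‖ = 1 := by
    intro θ; rw [norm_mul, Complex.norm_I, heE_norm, one_mul]
  have hvvb : ∀ θ : ℝ, ‖vv z ε θ‖ ≤ 5/4 := by
    intro θ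
    have h1 : ‖vv z ε θ‖ ≤ ‖z‖ + ‖((3:ℂ)/4 - (ε:ℂ)) * eE θ‖ := by
      unfold vv; exact (norm_add_le _ _).trans (by rw [norm_neg])
    have h2 : ‖((3:ℂ)/4 - (ε:ℂ)) * eE θ‖ = |3/4 - ε| := by
      rw [norm_mul, heE_norm, mul_one,
        show (3:ℂ)/4 - (ε:ℂ) = ((3/4 - ε : ℝ) : ℂ) by push_cast; ring,
        Complex.norm_real, Real.norm_eq_abs]
    rw [h2, _root_.abs_of_nonneg (show (0:ℝ) ≤ 3/4 - ε by linarith)] at h1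
    linarith
  have hcnorm : ‖((3:ℂ)/4 - (ε:ℂ))‖ ≤ 3/4 := by
    rw [show (3:ℂ)/4 - (ε:ℂ) = ((3/4 - ε : ℝ) : ℂ) by push_cast; ring,
      Complex.norm_real, Real.norm_eq_abs, _root_.abs_of_nonneg (show (0:ℝ) ≤ 3/4 - ε by linarith)]
    linarith
  set CB : ℝ := ((3/4)*Cf + (CA*(5/4))) * (2/ε) + Cf * ((5/4)/((ε/2)^2)) with hCB
  have hPP'b : ∀ x ∈ Soo, ∀ θ : ℝ, ‖PP' f A z ε x θ‖ ≤ CB := by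
    intro x hx θ
    obtain ⟨hd1, _, _, hρlb, hρub⟩ := geom_bounds (θ := θ) hz hε hε16 hx.1 hx.2
    have hfub : ‖f (uu z ε x θ)‖ ≤ Cf := hCf _ (humem x hx θ)
    have hAub : ‖A (uu z ε x θ)‖ ≤ CA := hCA _ (humem x hx θ)
    have hrrn : ‖rr ε x‖ ≤ 1 := by
      rw [rr_coe, Complex.norm_real, Real.norm_eq_abs,
        _root_.abs_of_nonneg (by linarith : (0:ℝ) ≤ ε + x * (3/4 - ε))]
      exact hρub
    have hAvv : ‖A (uu z ε x θ) (vv z ε θ)‖ ≤ CA * (5/4) :=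
      le_trans ((A (uu z ε x θ)).le_opNorm _)
        (mul_le_mul hAub (hvvb θ) (norm_nonneg _) hCA0)
    have hinvb : ‖(uu z ε x θ - z)⁻¹‖ ≤ 2/ε := by
      rw [norm_inv]
      calc ‖uu z ε x θ - z‖⁻¹ ≤ (ε/2)⁻¹ := by
            apply inv_anti₀ (by linarith) hd1
        _ = 2/ε := by rw [inv_div]
    have hb1 : ‖((3:ℂ)/4 - (ε:ℂ)) * (Complex.I * eE θ) * f (uu z ε x θ)‖ ≤ (3/4) * Cf := by
      rw [norm_mul, norm_mul, hIeE, mul_one]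
      exact mul_le_mul hcnorm hfub (norm_nonneg _) (by norm_num)
    have hb2 : ‖rr ε x * (Complex.I * eE θ) * (A (uu z ε x θ) (vv z ε θ))‖ ≤ CA * (5/4) := by
      rw [norm_mul, norm_mul, hIeE, mul_one]
      calc ‖rr ε x‖ * ‖A (uu z ε x θ) (vv z ε θ)‖ ≤ 1 * (CA * (5/4)) :=
            mul_le_mul hrrn hAvv (norm_nonneg _) (by norm_num)
        _ = CA * (5/4) := one_mul _
    have hb3 : ‖-(vv z ε θ) / (uu z ε x θ - z) ^ 2‖ ≤ (5/4)/((ε/2)^2) := by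
      rw [norm_div, norm_neg, norm_pow]
      apply div_le_div₀ (by positivity) (hvvb θ) (by positivity)
      exact pow_le_pow_left₀ (by linarith) hd1 2
    have hb4 : ‖rr ε x * (Complex.I * eE θ) * f (uu z ε x θ)‖ ≤ Cf := by
      rw [norm_mul, norm_mul, hIeE, mul_one]
      calc ‖rr ε x‖ * ‖f (uu z ε x θ)‖ ≤ 1 * Cf :=
            mul_le_mul hrrn hfub (norm_nonneg _) (by norm_num)
        _ = Cf := one_mul _
    calc ‖PP' f A z ε x θ‖
        ≤ ‖(((3:ℂ)/4 - (ε:ℂ)) * (Complex.I * eE θ) * f (uu z ε x θ)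
            + rr ε x * (Complex.I * eE θ) * (A (uu z ε x θ) (vv z ε θ)))
              * (uu z ε x θ - z)⁻¹‖
          + ‖rr ε x * (Complex.I * eE θ) * f (uu z ε x θ)
              * (-(vv z ε θ) / (uu z ε x θ - z) ^ 2)‖ := norm_add_le _ _
      _ ≤ ((3/4)*Cf + (CA*(5/4))) * (2/ε) + Cf * ((5/4)/((ε/2)^2)) := by
          rw [norm_mul, norm_mul]
          apply add_le_add
          · exact mul_le_mul (le_trans (norm_add_le _ _) (add_le_add hb1 hb2)) hinvb
              (norm_nonneg _) (by positivity)
          · exact mul_le_mul hb4 hb3 (norm_nonneg _) hCf0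
  -- differentiability of Φ and derivative bound
  have hΦd : ∀ s₀ ∈ Set.Icc (0:ℝ) 1,
      HasDerivAt (fun s => ∫ θ in (0:ℝ)..(2*Real.pi), PP f z ε s θ)
        (∫ θ in (0:ℝ)..(2*Real.pi), PP' f A z ε s₀ θ) s₀ ∧
      IntervalIntegrable (PP' f A z ε s₀) MeasureTheory.volume 0 (2*Real.pi) := by
    intro s₀ hs₀
    set εb := min (1/100) (ε/6) with hεbdef
    have hεb : 0 < εb := lt_min (by norm_num) (by linarith)
    have hball : Metric.ball s₀ εb ⊆ Soo := by
      intro x hx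
      rw [mem_ball, Real.dist_eq] at hx
      have h1 : |x - s₀| < εb := hx
      have h2 := abs_lt.mp h1
      constructor
      · have : εb ≤ ε/6 := min_le_right _ _
        nlinarith [hs₀.1]
      · have : εb ≤ 1/100 := min_le_left _ _
        nlinarith [hs₀.2]
    have hs₀S : s₀ ∈ Soo := hball (mem_ball_self hεb)
    have H := intervalIntegral.hasDerivAt_integral_of_dominated_loc_of_deriv_le
      (F := fun s θ => PP f z ε s θ) (F' := fun s θ => PP' f A z ε s θ)
      (bound := fun _ => CB) (a := 0) (b := 2*Real.pi) (x₀ := s₀) (Metric.ball_mem_nhds s₀ hεb)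
      (Filter.eventually_of_mem (Metric.ball_mem_nhds s₀ hεb)
        (fun x hx => ((hcontPP x (hball hx)).aestronglyMeasurable).restrict))
      ((hcontPP s₀ hs₀S).intervalIntegrable (μ := MeasureTheory.volume) 0 (2*Real.pi))
      (((hcontPP' s₀ hs₀S).aestronglyMeasurable).restrict)
      (Filter.Eventually.of_forall (fun θ _ x hx => hPP'b x (hball hx) θ))
      intervalIntegrable_const
      (Filter.Eventually.of_forall (fun θ _ x hx =>
        hasDerivAt_PP (hA _ (humem x (hball hx) θ)) (hune x (hball hx) θ)))
    exact ⟨H.2, H.1⟩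
  -- IBP : integral of QQ' vanishes
  have heEper : eE (2*Real.pi) = eE 0 := by
    unfold eE
    push_cast
    rw [Complex.exp_two_pi_mul_I]
    simp
  have hQzero : ∀ s₀ ∈ Soo, (∫ θ in (0:ℝ)..(2*Real.pi), QQ' f A z ε s₀ θ) = 0 := by
    intro s₀ hs₀S
    have h1 : (∫ θ in (0:ℝ)..(2*Real.pi), QQ' f A z ε s₀ θ)
        = QQ f z ε s₀ (2*Real.pi) - QQ f z ε s₀ 0 := by
      apply intervalIntegral.integral_eq_sub_of_hasDerivAt
      · exact fun θ _ => hasDerivAt_QQ (hA _ (humem s₀ hs₀S θ)) (hune s₀ hs₀S θ)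
      · exact (hcontQQ' s₀ hs₀S).intervalIntegrable _ _
    have h2 : QQ f z ε s₀ (2*Real.pi) = QQ f z ε s₀ 0 := by
      unfold QQ uu vv; rw [heEper]
    rw [h1, h2, sub_self]
  -- derivative norm bound
  have hDbound : ∀ s₀ ∈ Set.Icc (0:ℝ) 1,
      ‖∫ θ in (0:ℝ)..(2*Real.pi), PP' f A z ε s₀ θ‖ ≤ 8*M*(2*Real.pi) := by
    intro s₀ hs₀
    have hs₀S : s₀ ∈ Soo := by
      constructor
      · have := hs₀.1; nlinarith
      · have := hs₀.2; nlinarith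
    have hsub : (∫ θ in (0:ℝ)..(2*Real.pi), (PP' f A z ε s₀ θ - QQ' f A z ε s₀ θ))
        = (∫ θ in (0:ℝ)..(2*Real.pi), PP' f A z ε s₀ θ)
          - (∫ θ in (0:ℝ)..(2*Real.pi), QQ' f A z ε s₀ θ) :=
      intervalIntegral.integral_sub ((hΦd s₀ hs₀).2) ((hcontQQ' s₀ hs₀S).intervalIntegrable _ _)
    rw [show (∫ θ in (0:ℝ)..(2*Real.pi), PP' f A z ε s₀ θ)
        = ∫ θ in (0:ℝ)..(2*Real.pi), (PP' f A z ε s₀ θ - QQ' f A z ε s₀ θ) by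
      rw [hsub, hQzero s₀ hs₀S, sub_zero]]
    calc ‖∫ θ in (0:ℝ)..(2*Real.pi), (PP' f A z ε s₀ θ - QQ' f A z ε s₀ θ)‖
        ≤ 8*M * |2*Real.pi - 0| := by
          apply intervalIntegral.norm_integral_le_of_norm_le_const
          intro θ _
          exact key_estimate hz hε hε16 hs₀S.1 hs₀S.2 (hb _ (humem s₀ hs₀S θ))
      _ = 8*M*(2*Real.pi) := by
          rw [sub_zero, _root_.abs_of_pos (by linarith)]
  -- mean value inequality
  have hMVT : ‖(∫ θ in (0:ℝ)..(2*Real.pi), PP f z ε 1 θ)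
      - (∫ θ in (0:ℝ)..(2*Real.pi), PP f z ε 0 θ)‖ ≤ 8*M*(2*Real.pi) := by
    have := Convex.norm_image_sub_le_of_norm_hasDerivWithin_le
      (f := fun s => ∫ θ in (0:ℝ)..(2*Real.pi), PP f z ε s θ)
      (f' := fun s₀ => ∫ θ in (0:ℝ)..(2*Real.pi), PP' f A z ε s₀ θ)
      (s := Set.Icc (0:ℝ) 1)
      (fun x hx => ((hΦd x hx).1).hasDerivWithinAt) hDbound (convex_Icc 0 1)
      (Set.mem_Icc.mpr ⟨le_refl 0, by norm_num⟩) (Set.mem_Icc.mpr ⟨by norm_num, le_refl 1⟩)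
    simpa using this
  -- endpoints
  have heEne : ∀ θ : ℝ, eE θ ≠ 0 := fun θ => Complex.exp_ne_zero _
  have hεcne : (ε:ℂ) ≠ 0 := by
    simp only [ne_eq, Complex.ofReal_eq_zero]; linarith
  have hu0 : ∀ θ : ℝ, uu z ε 0 θ = z + (ε:ℂ) * eE θ := by
    intro θ; unfold uu rr; push_cast; ring
  have hu1 : ∀ θ : ℝ, uu z ε 1 θ = (3:ℂ)/4 * eE θ := by
    intro θ; unfold uu rr; push_cast; ring
  have hrr0 : rr ε 0 = (ε:ℂ) := by unfold rr; push_cast; ring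
  have hrr1 : rr ε 1 = (3:ℂ)/4 := by unfold rr; push_cast; ring
  have hP0 : ∀ θ : ℝ, PP f z ε 0 θ = Complex.I * f (z + (ε:ℂ) * eE θ) := by
    intro θ; unfold PP; rw [hu0, hrr0, show z + (ε:ℂ) * eE θ - z = (ε:ℂ) * eE θ by ring]
    have hne0 : (ε:ℂ) * eE θ ≠ 0 := mul_ne_zero hεcne (heEne θ)
    calc (ε:ℂ) * (Complex.I * eE θ) * f (z + (ε:ℂ) * eE θ) * ((ε:ℂ) * eE θ)⁻¹
        = Complex.I * f (z + (ε:ℂ) * eE θ) * ((ε:ℂ) * eE θ * ((ε:ℂ) * eE θ)⁻¹) := by ring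
      _ = Complex.I * f (z + (ε:ℂ) * eE θ) := by rw [mul_inv_cancel₀ hne0, mul_one]
  have hP1 : ∀ θ : ℝ,
      PP f z ε 1 θ = Complex.I * ((3:ℂ)/4 * eE θ * f ((3:ℂ)/4 * eE θ) * ((3:ℂ)/4 * eE θ - z)⁻¹) := by
    intro θ; unfold PP; rw [hu1, hrr1]; ring
  have hΦ0 : (∫ θ in (0:ℝ)..(2*Real.pi), PP f z ε 0 θ)
      = Complex.I * ∫ θ in (0:ℝ)..(2*Real.pi), f (z + (ε:ℂ) * eE θ) := by
    simp_rw [hP0]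
    exact intervalIntegral.integral_const_mul _ _
  have hΦ1 : (∫ θ in (0:ℝ)..(2*Real.pi), PP f z ε 1 θ)
      = Complex.I * ∫ θ in (0:ℝ)..(2*Real.pi),
          (3:ℂ)/4 * eE θ * f ((3:ℂ)/4 * eE θ) * ((3:ℂ)/4 * eE θ - z)⁻¹ := by
    simp_rw [hP1]
    exact intervalIntegral.integral_const_mul _ _
  set Fa : ℂ := ∫ θ in (0:ℝ)..(2*Real.pi), f (z + (ε:ℂ) * eE θ) with hFa
  set J : ℂ := ∫ θ in (0:ℝ)..(2*Real.pi),
      (3:ℂ)/4 * eE θ * f ((3:ℂ)/4 * eE θ) * ((3:ℂ)/4 * eE θ - z)⁻¹ with hJ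
  -- ‖Fa - J‖ ≤ 16 π M
  have hFaJ : ‖Fa - J‖ ≤ 8*M*(2*Real.pi) := by
    have h1 : Fa - J = (-Complex.I) * ((∫ θ in (0:ℝ)..(2*Real.pi), PP f z ε 0 θ)
        - (∫ θ in (0:ℝ)..(2*Real.pi), PP f z ε 1 θ)) := by
      rw [hΦ0, hΦ1]
      have hI2 := Complex.I_sq
      linear_combination (Fa - J) * hI2
    rw [h1, norm_mul, norm_neg, Complex.norm_I, one_mul, ← norm_neg, neg_sub]
    exact hMVT
  -- first part: ‖f z - (2π)⁻¹ • Fa‖ ≤ η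
  have h2πne : (2*Real.pi) ≠ 0 := by positivity
  have hfirst : ‖f z - (2*Real.pi)⁻¹ • Fa‖ ≤ η := by
    have hcont0 : Continuous fun θ : ℝ => f (z + (ε:ℂ) * eE θ) := by
      have := hcontfu 0 (by constructor <;> [linarith; norm_num])
      simpa [hu0] using this
    have hFaint : IntervalIntegrable (fun θ : ℝ => f (z + (ε:ℂ) * eE θ))
        MeasureTheory.volume 0 (2*Real.pi) := hcont0.intervalIntegrable _ _
    have hdiff : (2*Real.pi) • f z - Fa
        = ∫ θ in (0:ℝ)..(2*Real.pi), (f z - f (z + (ε:ℂ) * eE θ)) := by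
      rw [intervalIntegral.integral_sub (intervalIntegrable_const) hFaint,
        intervalIntegral.integral_const, sub_zero]
    have hptw : ∀ θ : ℝ, ‖f z - f (z + (ε:ℂ) * eE θ)‖ ≤ η := by
      intro θ
      have hd : dist (z + (ε:ℂ) * eE θ) z < δ := by
        rw [dist_eq_norm, show z + (ε:ℂ) * eE θ - z = (ε:ℂ) * eE θ by ring, norm_mul,
          heE_norm, mul_one, Complex.norm_real, Real.norm_eq_abs,
          _root_.abs_of_pos hε]
        exact hεδ
      have := hδ hd
      rw [dist_eq_norm] at this
      rw [← norm_neg, neg_sub]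
      exact le_of_lt this
    have hnorm1 : ‖(2*Real.pi) • f z - Fa‖ ≤ η * (2*Real.pi) := by
      rw [hdiff]
      calc ‖∫ θ in (0:ℝ)..(2*Real.pi), (f z - f (z + (ε:ℂ) * eE θ))‖
          ≤ η * |2*Real.pi - 0| :=
            intervalIntegral.norm_integral_le_of_norm_le_const (fun θ _ => hptw θ)
        _ = η * (2*Real.pi) := by rw [sub_zero, _root_.abs_of_pos (by linarith)]
    have heq : f z - (2*Real.pi)⁻¹ • Fa = (2*Real.pi)⁻¹ • ((2*Real.pi) • f z - Fa) := by
      rw [smul_sub, inv_smul_smul₀ h2πne]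
    rw [heq, norm_smul, Real.norm_eq_abs, _root_.abs_of_pos (by positivity : (0:ℝ) < (2*Real.pi)⁻¹)]
    calc (2*Real.pi)⁻¹ * ‖(2*Real.pi) • f z - Fa‖ ≤ (2*Real.pi)⁻¹ * (η * (2*Real.pi)) := by
          apply mul_le_mul_of_nonneg_left hnorm1 (by positivity)
      _ = η := by field_simp
  -- final assembly
  have hsplit : f z - (2*Real.pi)⁻¹ • J
      = (f z - (2*Real.pi)⁻¹ • Fa) + (2*Real.pi)⁻¹ • (Fa - J) := by
    rw [smul_sub]; abel
  rw [hsplit]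
  calc ‖(f z - (2*Real.pi)⁻¹ • Fa) + (2*Real.pi)⁻¹ • (Fa - J)‖
      ≤ ‖f z - (2*Real.pi)⁻¹ • Fa‖ + ‖(2*Real.pi)⁻¹ • (Fa - J)‖ := norm_add_le _ _
    _ ≤ η + (2*Real.pi)⁻¹ * (8*M*(2*Real.pi)) := by
        apply add_le_add hfirst
        rw [norm_smul, Real.norm_eq_abs, _root_.abs_of_pos (by positivity : (0:ℝ) < (2*Real.pi)⁻¹)]
        exact mul_le_mul_of_nonneg_left hFaJ (by positivity)
    _ ≤ 8 * M + η := by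
        have : (2*Real.pi)⁻¹ * (8*M*(2*Real.pi)) = 8*M := by field_simp
        rw [this]; linarith

lemma primitive {f : ℂ → ℂ} (hfc : ContinuousOn f (closedBall (0:ℂ) (9/10))) :
    ∃ G : ℂ → ℂ, G 0 = 0 ∧ ∀ z ∈ ball (0:ℂ) (1/2),
      HasDerivAt G ((4*Real.pi)⁻¹ • (∫ θ in (0:ℝ)..(2*Real.pi),
        (3:ℂ)/4 * eE θ * f ((3:ℂ)/4 * eE θ) * ((3:ℂ)/4 * eE θ - z)⁻¹)) z := by
  obtain ⟨Cf, hCf⟩ := (isCompact_closedBall (0:ℂ) (9/10)).exists_bound_of_continuousOn hfc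
  set K : ℂ → ℝ → ℂ := fun x θ =>
    (-(Complex.log (1 - x / ((3:ℂ)/4 * eE θ)))) * ((3:ℂ)/4 * eE θ * f ((3:ℂ)/4 * eE θ)) with hK
  refine ⟨fun x => (4*Real.pi)⁻¹ • ∫ θ in (0:ℝ)..(2*Real.pi), K x θ, ?_, ?_⟩
  · simp [hK, Complex.log_one]
  intro z₀ hz₀
  rw [mem_ball, dist_zero_right] at hz₀
  -- basic facts
  have hcnorm : ∀ θ : ℝ, ‖(3:ℂ)/4 * eE θ‖ = 3/4 := by
    intro θ; rw [norm_mul, heE_norm, mul_one]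
    norm_num
  have hcne : ∀ θ : ℝ, (3:ℂ)/4 * eE θ ≠ 0 := by
    intro θ h
    have := hcnorm θ; rw [h, norm_zero] at this; norm_num at this
  have hcmem : ∀ θ : ℝ, (3:ℂ)/4 * eE θ ∈ closedBall (0:ℂ) (9/10) := by
    intro θ; rw [mem_closedBall, dist_zero_right, hcnorm]; norm_num
  have hxsmall : ∀ x ∈ Metric.ball z₀ (1/16 : ℝ), ‖x‖ < 9/16 := by
    intro x hx
    rw [mem_ball, dist_eq_norm] at hx
    calc ‖x‖ = ‖(x - z₀) + z₀‖ := by ring_nf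
    _ ≤ ‖x - z₀‖ + ‖z₀‖ := norm_add_le _ _
    _ < 9/16 := by linarith
  have hratio : ∀ x, ‖x‖ < 9/16 → ∀ θ : ℝ, ‖x / ((3:ℂ)/4 * eE θ)‖ ≤ 3/4 := by
    intro x hx θ
    rw [norm_div, hcnorm]
    rw [div_le_iff₀ (by norm_num)]
    linarith
  have hslit : ∀ x, ‖x‖ < 9/16 → ∀ θ : ℝ, 1 - x / ((3:ℂ)/4 * eE θ) ∈ Complex.slitPlane := by
    intro x hx θ
    rw [Complex.mem_slitPlane_iff]
    left
    have h1 : (1 - x / ((3:ℂ)/4 * eE θ)).re = 1 - (x / ((3:ℂ)/4 * eE θ)).re := by simp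
    have h2 : (x / ((3:ℂ)/4 * eE θ)).re ≤ 3/4 :=
      le_trans (Complex.re_le_norm _) (by exact hratio x hx θ)
    rw [h1]; linarith
  have hsub_ne : ∀ x, ‖x‖ < 9/16 → ∀ θ : ℝ, (3:ℂ)/4 * eE θ - x ≠ 0 := by
    intro x hx θ h
    have h1 : ‖(3:ℂ)/4 * eE θ‖ ≤ ‖(3:ℂ)/4 * eE θ - x‖ + ‖x‖ := by
      calc ‖(3:ℂ)/4 * eE θ‖ = ‖((3:ℂ)/4 * eE θ - x) + x‖ := by ring_nf
      _ ≤ _ := norm_add_le _ _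
    rw [h, norm_zero, hcnorm] at h1; linarith
  have hsub_norm : ∀ x, ‖x‖ < 9/16 → ∀ θ : ℝ, (3:ℝ)/16 ≤ ‖(3:ℂ)/4 * eE θ - x‖ := by
    intro x hx θ
    have h1 : ‖(3:ℂ)/4 * eE θ‖ ≤ ‖(3:ℂ)/4 * eE θ - x‖ + ‖x‖ := by
      calc ‖(3:ℂ)/4 * eE θ‖ = ‖((3:ℂ)/4 * eE θ - x) + x‖ := by ring_nf
      _ ≤ _ := norm_add_le _ _
    rw [hcnorm] at h1; linarith
  -- derivative of integrand
  have hKderiv : ∀ x, ‖x‖ < 9/16 → ∀ θ : ℝ,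
      HasDerivAt (fun x => K x θ)
        ((3:ℂ)/4 * eE θ * f ((3:ℂ)/4 * eE θ) * ((3:ℂ)/4 * eE θ - x)⁻¹) x := by
    intro x hx θ
    have h1 : HasDerivAt (fun x : ℂ => 1 - x / ((3:ℂ)/4 * eE θ)) (-(1 / ((3:ℂ)/4 * eE θ))) x := by
      have := ((hasDerivAt_id x).div_const ((3:ℂ)/4 * eE θ)).neg.const_add 1
      simpa [one_div, sub_eq_add_neg] using this
    have h2 : HasDerivAt (fun x : ℂ => Complex.log (1 - x / ((3:ℂ)/4 * eE θ)))
        ((-(1 / ((3:ℂ)/4 * eE θ))) / (1 - x / ((3:ℂ)/4 * eE θ))) x := h1.clog (hslit x hx θ)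
    have h3 := (h2.neg).mul_const ((3:ℂ)/4 * eE θ * f ((3:ℂ)/4 * eE θ))
    have heq : -((-(1 / ((3:ℂ)/4 * eE θ))) / (1 - x / ((3:ℂ)/4 * eE θ)))
        * ((3:ℂ)/4 * eE θ * f ((3:ℂ)/4 * eE θ))
        = (3:ℂ)/4 * eE θ * f ((3:ℂ)/4 * eE θ) * ((3:ℂ)/4 * eE θ - x)⁻¹ := by
      have hne1 : (1 - x / ((3:ℂ)/4 * eE θ)) ≠ 0 := Complex.slitPlane_ne_zero (hslit x hx θ)
      set c : ℂ := (3:ℂ)/4 * eE θ with hc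
      have hc0 : c ≠ 0 := hcne θ
      have hcx : c - x ≠ 0 := hsub_ne x hx θ
      field_simp
    rw [hK]
    exact heq ▸ h3
  have hz9 : ‖z₀‖ < 9/16 := by linarith
  have hCf0 : (0:ℝ) ≤ Cf := le_trans (norm_nonneg _) (hCf 0 (by simp; norm_num))
  have ccont : Continuous fun θ : ℝ => (3:ℂ)/4 * eE θ := continuous_const.mul heE_cont
  have fcomp : Continuous fun θ : ℝ => f ((3:ℂ)/4 * eE θ) := by
    simpa [Function.comp_def] using hfc.comp_continuous ccont hcmem
  have hKcont : ∀ x, ‖x‖ < 9/16 → Continuous fun θ => K x θ := by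
    intro x hx
    have hinner : Continuous fun θ : ℝ => 1 - x / ((3:ℂ)/4 * eE θ) :=
      continuous_const.sub (Continuous.div continuous_const ccont (fun θ => hcne θ))
    have hlog : Continuous fun θ : ℝ => Complex.log (1 - x / ((3:ℂ)/4 * eE θ)) :=
      hinner.clog (fun θ => hslit x hx θ)
    exact (hlog.neg).mul (ccont.mul fcomp)
  have hF'cont : Continuous fun θ : ℝ =>
      (3:ℂ)/4 * eE θ * f ((3:ℂ)/4 * eE θ) * ((3:ℂ)/4 * eE θ - z₀)⁻¹ :=
    (ccont.mul fcomp).mul ((ccont.sub continuous_const).inv₀ (fun θ => hsub_ne z₀ hz9 θ))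
  have hF'b : ∀ θ : ℝ, ∀ x ∈ Metric.ball z₀ (1/16 : ℝ),
      ‖(3:ℂ)/4 * eE θ * f ((3:ℂ)/4 * eE θ) * ((3:ℂ)/4 * eE θ - x)⁻¹‖ ≤ 4 * Cf := by
    intro θ x hx
    have hxs := hxsmall x hx
    rw [norm_mul, norm_mul, hcnorm, norm_inv]
    have h1 : ‖f ((3:ℂ)/4 * eE θ)‖ ≤ Cf := hCf _ (hcmem θ)
    have h2 : ‖(3:ℂ)/4 * eE θ - x‖⁻¹ ≤ 16/3 := by
      calc ‖(3:ℂ)/4 * eE θ - x‖⁻¹ ≤ ((3:ℝ)/16)⁻¹ :=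
            inv_anti₀ (by norm_num) (hsub_norm x hxs θ)
        _ = 16/3 := by norm_num
    calc 3/4 * ‖f ((3:ℂ)/4 * eE θ)‖ * ‖(3:ℂ)/4 * eE θ - x‖⁻¹
        ≤ 3/4 * Cf * (16/3) := by
          apply mul_le_mul (mul_le_mul le_rfl h1 (norm_nonneg _) (by norm_num)) h2
            (by positivity) (by positivity)
      _ = 4 * Cf := by ring
  have H := intervalIntegral.hasDerivAt_integral_of_dominated_loc_of_deriv_le
    (𝕜 := ℂ) (F := K)
    (F' := fun x θ => (3:ℂ)/4 * eE θ * f ((3:ℂ)/4 * eE θ) * ((3:ℂ)/4 * eE θ - x)⁻¹)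
    (bound := fun _ => 4 * Cf) (a := 0) (b := 2*Real.pi) (x₀ := z₀)
    (Metric.ball_mem_nhds z₀ (by norm_num : (0:ℝ) < 1/16))
    (Filter.eventually_of_mem (Metric.ball_mem_nhds z₀ (by norm_num : (0:ℝ) < 1/16))
      (fun x hx => ((hKcont x (hxsmall x hx)).aestronglyMeasurable).restrict))
    ((hKcont z₀ hz9).intervalIntegrable (μ := MeasureTheory.volume) 0 (2*Real.pi))
    (hF'cont.aestronglyMeasurable.restrict)
    (Filter.Eventually.of_forall (fun θ _ x hx => hF'b θ x hx))
    intervalIntegrable_const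
    (Filter.Eventually.of_forall (fun θ _ x hx => hKderiv x (hxsmall x hx) θ))
  exact H.2.const_smul ((4*Real.pi)⁻¹ : ℝ)

def LL : (ℂ →L[ℝ] ℝ) →L[ℝ] ℂ :=
  Complex.ofRealCLM.comp (ContinuousLinearMap.apply ℝ ℝ (1:ℂ))
    - Complex.I • (Complex.ofRealCLM.comp (ContinuousLinearMap.apply ℝ ℝ (Complex.I)))

lemma LL_apply (T : ℂ →L[ℝ] ℝ) : LL T = ((T 1 : ℝ) : ℂ) - Complex.I * ((T Complex.I : ℝ) : ℂ) := by
  simp [LL, ContinuousLinearMap.sub_apply, ContinuousLinearMap.smul_apply, smul_eq_mul]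


end BOCAux

/-- Quantitative form of Lemma 6.1 (Berndtsson–Ortega Cerdà): there is an absolute constant
`C₀ > 0` such that any `φ` that is `C²` on the unit disk with `0 ≤ Δφ ≤ M` differs from
`φ(0)` plus twice the real part of a holomorphic function `G` (with `G(0) = 0`) by at most
`C₀·M` on the disk of radius `1/2`. -/
theorem berndtsson_ortega_cerda_construction :
    ∃ C₀ : ℝ, 0 < C₀ ∧ ∀ M : ℝ, 0 ≤ M → ∀ φ : ℂ → ℝ,
      ContDiffOn ℝ 2 φ (ball (0 : ℂ) 1) →
      (∀ z ∈ ball (0 : ℂ) 1, 0 ≤ lapC φ z ∧ lapC φ z ≤ M) →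
      ∃ G : ℂ → ℂ, DifferentiableOn ℂ G (ball (0 : ℂ) (1 / 2)) ∧ G 0 = 0 ∧
        ∀ z ∈ ball (0 : ℂ) (1 / 2), |φ z - φ 0 - 2 * (G z).re| ≤ C₀ * M := by
  refine ⟨8, by norm_num, ?_⟩
  intro M hM φ hφ hlap
  have hπ : (0:ℝ) < Real.pi := Real.pi_pos
  set f : ℂ → ℂ := fun w => LL (fderiv ℝ φ w) with hfdef
  set B : ℂ → (ℂ →L[ℝ] (ℂ →L[ℝ] ℝ)) := fun w => fderiv ℝ (fderiv ℝ φ) w with hBdef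
  set A : ℂ → (ℂ →L[ℝ] ℂ) := fun w => LL.comp (B w) with hAdef
  have hsub : closedBall (0:ℂ) (9/10) ⊆ ball (0:ℂ) 1 := closedBall_subset_ball (by norm_num)
  have hφ' : ContDiffOn ℝ 1 (fderiv ℝ φ) (ball (0:ℂ) 1) :=
    hφ.fderiv_of_isOpen isOpen_ball (by norm_num)
  have hφdiff : ∀ w ∈ ball (0:ℂ) 1, HasFDerivAt φ (fderiv ℝ φ w) w := fun w hw =>
    ((hφ.differentiableOn (by norm_num)).differentiableAt (isOpen_ball.mem_nhds hw)).hasFDerivAt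
  have hBdiff : ∀ w ∈ ball (0:ℂ) 1, HasFDerivAt (fderiv ℝ φ) (B w) w := fun w hw =>
    ((hφ'.differentiableOn (by norm_num)).differentiableAt (isOpen_ball.mem_nhds hw)).hasFDerivAt
  have hfd : ∀ w ∈ closedBall (0:ℂ) (9/10), HasFDerivAt f (A w) w := fun w hw =>
    LL.hasFDerivAt.comp w (hBdiff w (hsub hw))
  have hBc : ContinuousOn B (ball (0:ℂ) 1) :=
    hφ'.continuousOn_fderiv_of_isOpen isOpen_ball (le_refl 1)
  have hAc : ContinuousOn A (closedBall (0:ℂ) (9/10)) := by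
    have h1 : Continuous fun T : ℂ →L[ℝ] (ℂ →L[ℝ] ℝ) => LL.comp T :=
      (ContinuousLinearMap.compSL ℂ (ℂ →L[ℝ] ℝ) ℂ (RingHom.id ℝ) (RingHom.id ℝ) LL).continuous
    exact (h1.comp_continuousOn (hBc.mono hsub))
  -- evaluation of lapC via B
  have heval : ∀ w ∈ ball (0:ℂ) 1, ∀ u : ℂ,
      fderiv ℝ (fun y => fderiv ℝ φ y u) w = (ContinuousLinearMap.apply ℝ ℝ u).comp (B w) :=
    fun w hw u =>
      (((ContinuousLinearMap.apply ℝ ℝ u).hasFDerivAt).comp w (hBdiff w hw)).fderiv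
  have hlapB : ∀ w ∈ ball (0:ℂ) 1, lapC φ w = B w 1 1 + B w Complex.I Complex.I := by
    intro w hw
    unfold lapC
    rw [heval w hw 1, heval w hw Complex.I]
    rfl
  have hsymm : ∀ w ∈ ball (0:ℂ) 1, B w 1 Complex.I = B w Complex.I 1 := by
    intro w hw
    exact second_derivative_symmetric_of_eventually
      (Filter.eventually_of_mem (isOpen_ball.mem_nhds hw) (fun y hy => hφdiff y hy))
      (hBdiff w hw) 1 Complex.I
  have hb : ∀ w ∈ closedBall (0:ℂ) (9/10), ‖A w 1 + Complex.I * A w Complex.I‖ ≤ M := by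
    intro w hw
    have hw1 : w ∈ ball (0:ℂ) 1 := hsub hw
    have hval : A w 1 + Complex.I * A w Complex.I = ((lapC φ w : ℝ) : ℂ) := by
      have h1 : A w 1 = ((B w 1 1 : ℝ) : ℂ) - Complex.I * ((B w 1 Complex.I : ℝ) : ℂ) := by
        rw [hAdef]; exact LL_apply (B w 1)
      have h2 : A w Complex.I
          = ((B w Complex.I 1 : ℝ) : ℂ) - Complex.I * ((B w Complex.I Complex.I : ℝ) : ℂ) := by
        rw [hAdef]; exact LL_apply (B w Complex.I)
      rw [h1, h2, hlapB w hw1]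
      have hcast : ((B w 1 Complex.I : ℝ) : ℂ) = ((B w Complex.I 1 : ℝ) : ℂ) := by
        rw [hsymm w hw1]
      push_cast
      linear_combination (-Complex.I) * hcast - ((B w Complex.I Complex.I : ℝ) : ℂ) * Complex.I_sq
    rw [hval, Complex.norm_real, Real.norm_eq_abs]
    rw [_root_.abs_of_nonneg (hlap w hw1).1]
    exact (hlap w hw1).2
  -- get the primitive
  have hfc : ContinuousOn f (closedBall (0:ℂ) (9/10)) :=
    fun w hw => ((hfd w hw).differentiableAt.continuousAt).continuousWithinAt
  obtain ⟨G, hG0, hG⟩ := primitive hfc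
  refine ⟨G, ?_, hG0, ?_⟩
  · exact fun z hz => ((hG z hz).differentiableAt).differentiableWithinAt
  intro z hz
  have hznorm : ‖z‖ < 1/2 := by rwa [mem_ball, dist_zero_right] at hz
  -- directional derivative formula for φ
  have hdφ : ∀ w ∈ ball (0:ℂ) 1, ∀ v : ℂ, (f w * v).re = fderiv ℝ φ w v := by
    intro w hw v
    have hT : fderiv ℝ φ w v
        = v.re * fderiv ℝ φ w 1 + v.im * fderiv ℝ φ w Complex.I := by
      conv_lhs => rw [show v = (v.re : ℝ) • (1:ℂ) + (v.im : ℝ) • Complex.I by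
        simp [Complex.real_smul, Complex.re_add_im]]
      rw [map_add, map_smul, map_smul, smul_eq_mul, smul_eq_mul]
    have hfw : f w = ((fderiv ℝ φ w 1 : ℝ) : ℂ)
        - Complex.I * ((fderiv ℝ φ w Complex.I : ℝ) : ℂ) := LL_apply _
    rw [hfw, hT]
    simp [Complex.mul_re, Complex.sub_re, Complex.sub_im]
    ring
  set Jz : ℂ → ℂ := fun x => ∫ θ in (0:ℝ)..(2*Real.pi),
    (3:ℂ)/4 * eE θ * f ((3:ℂ)/4 * eE θ) * ((3:ℂ)/4 * eE θ - x)⁻¹ with hJzdef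
  have hcore : ∀ x ∈ ball (0:ℂ) (1/2), ‖f x - (2*Real.pi)⁻¹ • Jz x‖ ≤ 8 * M := by
    intro x hx
    rw [mem_ball, dist_zero_right] at hx
    exact core hfd hAc hb hx
  set D : ℂ → (ℂ →L[ℝ] ℝ) := fun x => Complex.reCLM.comp
    ((ContinuousLinearMap.mul ℂ ℂ (f x - (2*Real.pi)⁻¹ • Jz x)).restrictScalars ℝ) with hDdef
  have hDval : ∀ x v, D x v = ((f x - (2*Real.pi)⁻¹ • Jz x) * v).re := fun x v => rfl
  have hDnorm : ∀ x ∈ ball (0:ℂ) (1/2), ‖D x‖ ≤ 8*M := by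
    intro x hx
    apply ContinuousLinearMap.opNorm_le_bound _ (by linarith)
    intro v
    rw [hDval, Real.norm_eq_abs]
    calc |((f x - (2*Real.pi)⁻¹ • Jz x) * v).re|
        ≤ ‖(f x - (2*Real.pi)⁻¹ • Jz x) * v‖ := Complex.abs_re_le_norm _
      _ = ‖f x - (2*Real.pi)⁻¹ • Jz x‖ * ‖v‖ := by rw [norm_mul]
      _ ≤ 8*M * ‖v‖ := mul_le_mul_of_nonneg_right (hcore x hx) (norm_nonneg v)
  have hball12 : ball (0:ℂ) (1/2) ⊆ ball (0:ℂ) 1 := ball_subset_ball (by norm_num)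
  have hψ : ∀ x ∈ ball (0:ℂ) (1/2), HasFDerivWithinAt (fun w => φ w - 2*(G w).re)
      (D x) (ball (0:ℂ) (1/2)) x := by
    intro x hx
    have hx1 : x ∈ ball (0:ℂ) 1 := hball12 hx
    have hφat := hφdiff x hx1
    have hGF : HasFDerivAt G
        (ContinuousLinearMap.smulRight (1 : ℂ →L[ℂ] ℂ) ((4*Real.pi)⁻¹ • Jz x)) x :=
      (hG x hx).hasFDerivAt
    have hRe : HasFDerivAt (fun w => (G w).re)
        (Complex.reCLM.comp ((ContinuousLinearMap.smulRight (1 : ℂ →L[ℂ] ℂ)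
          ((4*Real.pi)⁻¹ • Jz x)).restrictScalars ℝ)) x :=
      (Complex.reCLM.hasFDerivAt).comp x (hGF.restrictScalars ℝ)
    have hcomb := hφat.sub (hRe.const_mul (2:ℝ))
    have heq : fderiv ℝ φ x - (2:ℝ) • (Complex.reCLM.comp
        ((ContinuousLinearMap.smulRight (1 : ℂ →L[ℂ] ℂ)
          ((4*Real.pi)⁻¹ • Jz x)).restrictScalars ℝ)) = D x := by
      apply ContinuousLinearMap.ext
      intro v
      have h1 : (fderiv ℝ φ x - (2:ℝ) • (Complex.reCLM.comp
          ((ContinuousLinearMap.smulRight (1 : ℂ →L[ℂ] ℂ)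
            ((4*Real.pi)⁻¹ • Jz x)).restrictScalars ℝ))) v
          = fderiv ℝ φ x v - 2 * (v • ((4*Real.pi)⁻¹ • Jz x)).re := rfl
      rw [h1, hDval, ← hdφ x hx1 v]
      have h2 : (v • ((4*Real.pi)⁻¹ • Jz x) : ℂ) = (4*Real.pi)⁻¹ • (v * Jz x) := by
        rw [smul_eq_mul, Complex.real_smul, Complex.real_smul]; ring
      rw [h2, sub_mul, Complex.sub_re]
      have h3 : (((2*Real.pi)⁻¹ • Jz x) * v : ℂ) = (2*Real.pi)⁻¹ • (v * Jz x) := by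
        rw [Complex.real_smul, Complex.real_smul]; ring
      rw [h3, Complex.smul_re, Complex.smul_re]
      have h4 : (2*Real.pi)⁻¹ = 2 * (4*Real.pi)⁻¹ := by field_simp; ring
      rw [h4]; simp only [smul_eq_mul]; ring
    exact (heq ▸ hcomb).hasFDerivWithinAt
  have h0mem : (0:ℂ) ∈ ball (0:ℂ) (1/2) := mem_ball_self (by norm_num)
  have hMVT := Convex.norm_image_sub_le_of_norm_hasFDerivWithin_le hψ hDnorm
    (convex_ball 0 (1/2)) h0mem hz
  have hψ0 : φ 0 - 2*(G 0).re = φ 0 := by rw [hG0]; simp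
  rw [hψ0] at hMVT
  have hgoal : φ z - φ 0 - 2 * (G z).re = (φ z - 2*(G z).re) - φ 0 := by ring
  rw [show |φ z - φ 0 - 2 * (G z).re| = ‖(φ z - 2*(G z).re) - φ 0‖ by
    rw [Real.norm_eq_abs, hgoal]]
  calc ‖(φ z - 2*(G z).re) - φ 0‖ ≤ 8*M * ‖z - 0‖ := hMVT
    _ ≤ 8 * M := by
      rw [sub_zero]
      have : ‖z‖ < 1/2 := by rwa [mem_ball, dist_zero_right] at hz
      nlinarith [norm_nonneg z]

end
end

section
/- Let H₁, H₂, H₃ be complex Hilbert spaces, let T : H₁ ⇀ H₂ and S : H₂ ⇀ H₃ be densely defined closed linear operators, and suppose ran T ⊆ ker S. Let α ∈ ker S and C ≥ 0 be such that |⟨α, u⟩|² ≤ C·‖T*u‖² for every u ∈ dom T* ∩ ker S, where T* is the Hilbert-space adjoint of T. Then there exists h ∈ dom T with T h = α and ‖h‖² ≤ C. (Functional-analytic core of Theorem 5.6: the Riesz-representation/duality argument producing a solution of Th = α with norm control from the a priori estimate.) -/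
open scoped InnerProductSpace

/-- Functional-analytic core of Theorem 5.6: if `T`, `S` are densely defined closed
operators with `ran T ⊆ ker S`, `α ∈ ker S`, and `|⟨α,u⟩|² ≤ C‖T*u‖²` for all
`u ∈ dom T* ∩ ker S`, then there is `h ∈ dom T` with `T h = α` and `‖h‖² ≤ C`. -/
theorem exists_solution_of_apriori_estimate
    {H₁ H₂ H₃ : Type*}
    [NormedAddCommGroup H₁] [InnerProductSpace ℂ H₁] [CompleteSpace H₁]
    [NormedAddCommGroup H₂] [InnerProductSpace ℂ H₂] [CompleteSpace H₂]
    [NormedAddCommGroup H₃] [InnerProductSpace ℂ H₃] [CompleteSpace H₃]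
    (T : H₁ →ₗ.[ℂ] H₂) (S : H₂ →ₗ.[ℂ] H₃)
    (hTdense : Dense (T.domain : Set H₁)) (hSdense : Dense (S.domain : Set H₂))
    (hTclosed : T.IsClosed) (hSclosed : S.IsClosed)
    (hranker : ∀ v : T.domain, ∃ hv : (T v : H₂) ∈ S.domain, S ⟨T v, hv⟩ = 0)
    (α : H₂) (hα : α ∈ S.domain) (hα0 : S ⟨α, hα⟩ = 0)
    (C : ℝ) (hC : 0 ≤ C)
    (hest : ∀ u : H₂, ∀ hu : u ∈ T.adjoint.domain, ∀ hu' : u ∈ S.domain,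
      S ⟨u, hu'⟩ = 0 → ‖(⟪α, u⟫_ℂ : ℂ)‖ ^ 2 ≤ C * ‖T.adjoint ⟨u, hu⟩‖ ^ 2) :
    ∃ h : H₁, ∃ hh : h ∈ T.domain, T ⟨h, hh⟩ = α ∧ ‖h‖ ^ 2 ≤ C := by
  classical
  -- the kernel of `S` as a closed submodule of `H₂`
  let N : Submodule ℂ H₂ := (LinearMap.ker S.toFun).map S.domain.subtype
  have hmemN : ∀ u : H₂, u ∈ N ↔ ∃ hu : u ∈ S.domain, S ⟨u, hu⟩ = 0 := by
    intro u
    simp only [N, Submodule.mem_map, LinearMap.mem_ker]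
    constructor
    · rintro ⟨⟨x, hx⟩, h0, rfl⟩; exact ⟨hx, h0⟩
    · rintro ⟨hu, h0⟩; exact ⟨⟨u, hu⟩, h0, rfl⟩
  have hNclosed : IsClosed (N : Set H₂) := by
    have hset : (N : Set H₂) = (fun u => (u, (0 : H₃))) ⁻¹' (S.graph : Set (H₂ × H₃)) := by
      ext u
      simp only [Set.mem_preimage, SetLike.mem_coe, LinearPMap.mem_graph_iff, hmemN]
      constructor
      · rintro ⟨hu, h0⟩; exact ⟨⟨u, hu⟩, rfl, h0⟩
      · rintro ⟨⟨x, hx⟩, h1, h2⟩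
        simp only at h1
        subst h1
        exact ⟨hx, h2⟩
    rw [hset]
    exact hSclosed.preimage (Continuous.prodMk_left 0)
  have hαN : α ∈ N := (hmemN α).2 ⟨hα, hα0⟩
  haveI : CompleteSpace N := hNclosed.completeSpace_coe
  -- ran T ⊆ N
  have hranN : ∀ v : T.domain, (T v : H₂) ∈ N := fun v => (hmemN _).2 (hranker v)
  -- key estimate for all u in dom T†
  have hkeyest : ∀ (u : T.adjoint.domain),
      ‖(⟪α, (u : H₂)⟫_ℂ : ℂ)‖ ^ 2 ≤ C * ‖T.adjoint u‖ ^ 2 := by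
    rintro ⟨u, hu⟩
    set w : H₂ := u - (Submodule.orthogonalProjectionOnto N u : H₂) with hw
    have hwperp : w ∈ Nᗮ := Submodule.sub_starProjection_mem_orthogonal (K := N) u
    have hwTv : ∀ v : T.domain, ⟪w, (T v : H₂)⟫_ℂ = 0 := fun v =>
      Submodule.inner_left_of_mem_orthogonal (hranN v) hwperp
    have hwadj : w ∈ T.adjoint.domain :=
      T.mem_adjoint_domain_of_exists w ⟨0, fun v => by
        rw [inner_zero_left, hwTv v]⟩
    have hw0 : T.adjoint ⟨w, hwadj⟩ = 0 :=
      LinearPMap.adjoint_apply_eq hTdense ⟨w, hwadj⟩ (fun v => by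
        rw [inner_zero_left, hwTv v])
    have hPmem : (Submodule.orthogonalProjectionOnto N u : H₂) ∈ T.adjoint.domain := by
      have : (Submodule.orthogonalProjectionOnto N u : H₂) = u - w := by rw [hw]; abel
      rw [this]; exact Submodule.sub_mem _ hu hwadj
    have hTP : T.adjoint ⟨(Submodule.orthogonalProjectionOnto N u : H₂), hPmem⟩ = T.adjoint ⟨u, hu⟩ := by
      have heq : (⟨(Submodule.orthogonalProjectionOnto N u : H₂), hPmem⟩ : T.adjoint.domain)
          = ⟨u, hu⟩ - ⟨w, hwadj⟩ := by
        ext; simp only [AddSubgroupClass.coe_sub]; rw [hw]; abel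
      rw [heq, LinearPMap.map_sub, hw0, sub_zero]
    have hαw : ⟪α, w⟫_ℂ = 0 :=
      Submodule.inner_right_of_mem_orthogonal hαN hwperp
    have hαu : ⟪α, u⟫_ℂ = ⟪α, (Submodule.orthogonalProjectionOnto N u : H₂)⟫_ℂ := by
      have h2 := hαw
      rw [hw, inner_sub_right, sub_eq_zero] at h2
      exact h2
    obtain ⟨hu', h0'⟩ := (hmemN _).1 (Submodule.orthogonalProjectionOnto N u).2
    have := hest (Submodule.orthogonalProjectionOnto N u : H₂) hPmem hu' h0'
    rw [hTP] at this
    rw [hαu]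
    exact this
  -- the linear functional `T† u ↦ ⟪α, u⟫` on the range of `T†`
  set f : T.adjoint.domain →ₗ[ℂ] H₁ := T.adjoint.toFun with hf
  have hfapp : ∀ u : T.adjoint.domain, f u = T.adjoint u := fun u => rfl
  set g : T.adjoint.domain →ₗ[ℂ] ℂ := (innerₛₗ ℂ α).comp T.adjoint.domain.subtype with hg
  have hgapp : ∀ u : T.adjoint.domain, g u = ⟪α, (u : H₂)⟫_ℂ := fun u => rfl
  have hbound : ∀ u : T.adjoint.domain, ‖g u‖ ≤ Real.sqrt C * ‖f u‖ := by
    intro u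
    have h1 := hkeyest u
    have h2 : ‖g u‖ = Real.sqrt (‖g u‖ ^ 2) := by
      rw [Real.sqrt_sq (norm_nonneg _)]
    rw [h2, hgapp]
    calc Real.sqrt (‖(⟪α, (u : H₂)⟫_ℂ : ℂ)‖ ^ 2) ≤ Real.sqrt (C * ‖T.adjoint u‖ ^ 2) :=
          Real.sqrt_le_sqrt h1
      _ = Real.sqrt C * ‖f u‖ := by
          rw [Real.sqrt_mul hC, Real.sqrt_sq (norm_nonneg _), hfapp]
  have hker : LinearMap.ker f ≤ LinearMap.ker g := by
    intro u hu
    rw [LinearMap.mem_ker] at hu ⊢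
    have := hbound u
    rw [hu, norm_zero, mul_zero] at this
    exact norm_le_zero_iff.mp this
  set ℓ₀ : LinearMap.range f →ₗ[ℂ] ℂ :=
    ((LinearMap.ker f).liftQ g hker).comp f.quotKerEquivRange.symm.toLinearMap with hℓ₀def
  have hℓ₀ : ∀ u : T.adjoint.domain, ℓ₀ ⟨f u, LinearMap.mem_range_self f u⟩ = g u := by
    intro u
    simp only [hℓ₀def, LinearMap.coe_comp, Function.comp_apply, LinearEquiv.coe_coe]
    rw [LinearMap.quotKerEquivRange_symm_apply_image, Submodule.mkQ_apply,
      Submodule.liftQ_apply]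
  have hℓ₀bound : ∀ x : LinearMap.range f, ‖ℓ₀ x‖ ≤ Real.sqrt C * ‖x‖ := by
    rintro ⟨x, hx⟩
    obtain ⟨u, rfl⟩ := hx
    rw [hℓ₀ u]
    exact hbound u
  set ℓ : LinearMap.range f →L[ℂ] ℂ := LinearMap.mkContinuous ℓ₀ (Real.sqrt C) hℓ₀bound with hℓdef
  have hℓnorm : ‖ℓ‖ ≤ Real.sqrt C :=
    LinearMap.mkContinuous_norm_le _ (Real.sqrt_nonneg C) _
  obtain ⟨G, hGext, hGnorm⟩ := exists_extension_norm_eq (LinearMap.range f) ℓ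
  set h : H₁ := (InnerProductSpace.toDual ℂ H₁).symm G with hhdef
  have hhnorm : ‖h‖ ^ 2 ≤ C := by
    have h1 : ‖h‖ = ‖G‖ := LinearIsometryEquiv.norm_map _ G
    have h2 : ‖h‖ ≤ Real.sqrt C := by rw [h1, hGnorm]; exact hℓnorm
    calc ‖h‖ ^ 2 ≤ Real.sqrt C ^ 2 := pow_le_pow_left₀ (norm_nonneg h) h2 2
      _ = C := Real.sq_sqrt hC
  have hkey : ∀ u : T.adjoint.domain, ⟪h, T.adjoint u⟫_ℂ = ⟪α, (u : H₂)⟫_ℂ := by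
    intro u
    have h1 : ⟪h, f u⟫_ℂ = G (f u) := InnerProductSpace.toDual_symm_apply
    have h2 : G (f u) = ℓ ⟨f u, LinearMap.mem_range_self f u⟩ :=
      hGext ⟨f u, LinearMap.mem_range_self f u⟩
    have h3 : ℓ ⟨f u, LinearMap.mem_range_self f u⟩ = g u := hℓ₀ u
    rw [← hfapp, h1, h2, h3, hgapp]
  -- conclude via the closed graph and double orthogonal complement
  let e := WithLp.linearEquiv 2 ℂ (H₁ × H₂)
  let G₂ : Submodule ℂ (WithLp 2 (H₁ × H₂)) := T.graph.comap e.toLinearMap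
  have hG₂mem : ∀ z : WithLp 2 (H₁ × H₂), z ∈ G₂ ↔ e z ∈ T.graph := fun z => Iff.rfl
  have hG₂closed : IsClosed (G₂ : Set (WithLp 2 (H₁ × H₂))) := by
    have : (G₂ : Set (WithLp 2 (H₁ × H₂)))
        = (WithLp.prodContinuousLinearEquiv 2 ℂ H₁ H₂) ⁻¹' (T.graph : Set (H₁ × H₂)) := rfl
    rw [this]
    exact hTclosed.preimage (WithLp.prodContinuousLinearEquiv 2 ℂ H₁ H₂).continuous
  haveI : CompleteSpace G₂ := hG₂closed.completeSpace_coe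
  set z : WithLp 2 (H₁ × H₂) := (WithLp.equiv 2 (H₁ × H₂)).symm (h, α) with hzdef
  have hz : z ∈ G₂ := by
    rw [← Submodule.orthogonal_orthogonal G₂]
    rw [Submodule.mem_orthogonal]
    intro w hw
    rw [Submodule.mem_orthogonal'] at hw
    set w₁ : H₁ := (e w).1 with hw₁
    set w₂ : H₂ := (e w).2 with hw₂
    have hwv : ∀ v : T.domain, ⟪w₁, (v : H₁)⟫_ℂ + ⟪w₂, (T v : H₂)⟫_ℂ = 0 := by
      intro v
      have hmem : (WithLp.equiv 2 (H₁ × H₂)).symm ((v : H₁), (T v : H₂)) ∈ G₂ :=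
        T.mem_graph v
      have := hw _ hmem
      rw [WithLp.prod_inner_apply] at this
      exact this
    have hw₂adj : w₂ ∈ T.adjoint.domain := by
      refine T.mem_adjoint_domain_of_exists w₂ ⟨-w₁, fun v => ?_⟩
      have := hwv v
      rw [inner_neg_left]
      linear_combination -this
    have hTw₂ : T.adjoint ⟨w₂, hw₂adj⟩ = -w₁ := by
      refine LinearPMap.adjoint_apply_eq hTdense ⟨w₂, hw₂adj⟩ (fun v => ?_)
      have := hwv v
      rw [inner_neg_left]
      linear_combination -this
    have hinner : ⟪w, z⟫_ℂ = ⟪w₁, h⟫_ℂ + ⟪w₂, α⟫_ℂ := by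
      rw [WithLp.prod_inner_apply]
      rfl
    have hc : ⟪(T.adjoint ⟨w₂, hw₂adj⟩ : H₁), h⟫_ℂ = ⟪w₂, α⟫_ℂ := by
      rw [← inner_conj_symm, hkey ⟨w₂, hw₂adj⟩, inner_conj_symm]
    rw [hTw₂, inner_neg_left] at hc
    rw [hinner]
    linear_combination -hc
  have hzg : ((h, α) : H₁ × H₂) ∈ T.graph := hz
  rw [LinearPMap.mem_graph_iff] at hzg
  obtain ⟨u₀, hu₀1, hu₀2⟩ := hzg
  have hu₀1' : (u₀ : H₁) = h := hu₀1
  refine ⟨h, hu₀1' ▸ u₀.2, ?_, hhnorm⟩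
  have heq : (⟨h, hu₀1' ▸ u₀.2⟩ : T.domain) = u₀ := Subtype.ext hu₀1'.symm
  rw [heq]
  exact hu₀2
end
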